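/- For every pair of 2×2 special unitary matrices A, B ∈ SU(2), there exists a real antisymmetric 4×4 matrix h such that G(A,B) = exp(iH), where H = i Σ_{μ≠ν} h_{μν} c_μ c_ν is the quadratic Hamiltonian built from the two-qubit Jordan–Wigner operators c_1 = X⊗I, c_2 = Y⊗I, c_3 = Z⊗X, c_4 = Z⊗Y. That is, every nearest-neighbour G(A,B) gate with A, B ∈ SU(2) is a Gaussian operation. -/

import Mathlib

open Matrix Complex

noncomputable section

/-- Pauli X matrix. -/
def pX : Matrix (Fin 2) (Fin 2) ℂ := !![0, 1; 1, 0]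

/-- Pauli Y matrix. -/
def pY : Matrix (Fin 2) (Fin 2) ℂ := !![0, -Complex.I; Complex.I, 0]

/-- Pauli Z matrix. -/
def pZ : Matrix (Fin 2) (Fin 2) ℂ := !![1, 0; 0, -1]

/-- Kronecker product of two 2×2 matrices, as a 4×4 matrix
(basis ordering `|00⟩,|01⟩,|10⟩,|11⟩`). -/
def kron4 (P Q : Matrix (Fin 2) (Fin 2) ℂ) : Matrix (Fin 4) (Fin 4) ℂ :=
  Matrix.of fun i j =>
    P ⟨(i : ℕ) / 2, by have := i.isLt; omega⟩ ⟨(j : ℕ) / 2, by have := j.isLt; omega⟩ *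
      Q ⟨(i : ℕ) % 2, by omega⟩ ⟨(j : ℕ) % 2, by omega⟩

/-- The Jordan–Wigner operators on two qubits:
`c_1 = X⊗I`, `c_2 = Y⊗I`, `c_3 = Z⊗X`, `c_4 = Z⊗Y`. -/
def c1 : Matrix (Fin 4) (Fin 4) ℂ := kron4 pX 1
def c2 : Matrix (Fin 4) (Fin 4) ℂ := kron4 pY 1
def c3 : Matrix (Fin 4) (Fin 4) ℂ := kron4 pZ pX
def c4 : Matrix (Fin 4) (Fin 4) ℂ := kron4 pZ pY

/-- The two-qubit gate `G(A,B)` (basis ordering `|00⟩,|01⟩,|10⟩,|11⟩`). -/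
def G (A B : Matrix (Fin 2) (Fin 2) ℂ) : Matrix (Fin 4) (Fin 4) ℂ :=
  !![A 0 0, 0,     0,     A 0 1;
     0,     B 0 0, B 0 1, 0;
     0,     B 1 0, B 1 1, 0;
     A 1 0, 0,     0,     A 1 1]

/-- The two-qubit Jordan–Wigner operators, as a family. -/
def cvec : Fin 4 → Matrix (Fin 4) (Fin 4) ℂ := ![c1, c2, c3, c4]

/-- The quadratic Hamiltonian `H = i ∑_{μ≠ν} h_{μν} c_μ c_ν` on two qubits. -/
def quadH2 (h : Matrix (Fin 4) (Fin 4) ℝ) : Matrix (Fin 4) (Fin 4) ℂ :=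
  Complex.I • ∑ μ, ∑ ν, if μ ≠ ν then (h μ ν : ℂ) • (cvec μ * cvec ν) else 0

/-! ### Auxiliary material -/

attribute [local instance] Matrix.linftyOpNormedRing Matrix.linftyOpNormedAlgebra

open Quaternion in
/-- Helper constructor for quaternions. -/
def quat (t x y z : ℝ) : ℍ[ℝ] := ⟨t, x, y, z⟩

@[simp] lemma quat_re (t x y z : ℝ) : (quat t x y z).re = t := rfl
@[simp] lemma quat_imI (t x y z : ℝ) : (quat t x y z).imI = x := rfl
@[simp] lemma quat_imJ (t x y z : ℝ) : (quat t x y z).imJ = y := rfl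
@[simp] lemma quat_imK (t x y z : ℝ) : (quat t x y z).imK = z := rfl

lemma fin4v3 : ((3 : Fin 4) : ℕ) = 3 := rfl

open Quaternion in
/-- The standard representation of the quaternions on `ℂ²`. -/
def qm : ℍ[ℝ] →ₐ[ℝ] Matrix (Fin 2) (Fin 2) ℂ where
  toFun q := !![(q.re : ℂ) + q.imI * Complex.I, q.imJ + q.imK * Complex.I;
                -(q.imJ : ℂ) + q.imK * Complex.I, (q.re : ℂ) - q.imI * Complex.I]
  map_one' := by ext i j; fin_cases i <;> fin_cases j <;> simp
  map_mul' q r := by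
    ext i j
    fin_cases i <;> fin_cases j <;>
      simp [Matrix.mul_apply, Fin.sum_univ_two, Quaternion.re_mul, Quaternion.imI_mul,
        Quaternion.imJ_mul, Quaternion.imK_mul, Complex.ext_iff] <;> constructor <;> ring
  map_zero' := by ext i j; fin_cases i <;> fin_cases j <;> simp
  map_add' q r := by
    ext i j
    fin_cases i <;> fin_cases j <;> simp <;> ring
  commutes' r := by
    ext i j
    fin_cases i <;> fin_cases j <;> simp [Matrix.algebraMap_eq_diagonal]

open Quaternion in
/-- Every unit quaternion is the exponential of a purely imaginary quaternion. -/
theorem unit_quat_exp (u : ℍ[ℝ]) (hu : ‖u‖ = 1) :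
    ∃ q : ℍ[ℝ], q.re = 0 ∧ NormedSpace.exp q = u := by
  have hsq : u.re ^ 2 + ‖u.im‖ ^ 2 = 1 := by
    have h1 : normSq u = 1 := by
      have := Quaternion.normSq_eq_norm_mul_self u
      rw [hu] at this; simpa using this
    have h2 : ‖u.im‖ ^ 2 = normSq u.im := by
      rw [Quaternion.normSq_eq_norm_mul_self]; ring
    have h3 : normSq u = u.re ^ 2 + normSq u.im := by
      rw [Quaternion.normSq_def', Quaternion.normSq_def']; simp; ring
    rw [h2, ← h3, h1]
  by_cases hv : u.im = 0
  · rw [hv] at hsq; simp at hsq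
    have hu' : u = (u.re : ℍ[ℝ]) := by
      conv_lhs => rw [← Quaternion.re_add_im u]
      rw [hv, add_zero]
    rcases hsq with h | h
    · exact ⟨0, rfl, by rw [NormedSpace.exp_zero, hu', h]; norm_num⟩
    · refine ⟨(⟨0, Real.pi, 0, 0⟩ : ℍ[ℝ]), rfl, ?_⟩
      set p : ℍ[ℝ] := ⟨0, Real.pi, 0, 0⟩ with hp
      have hre : p.re = 0 := rfl
      have hn : ‖p‖ = Real.pi := by
        have h5 : normSq p = Real.pi ^ 2 := by
          rw [Quaternion.normSq_def' p]; simp [hp]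
        have h4 := Quaternion.normSq_eq_norm_mul_self p
        rw [h5] at h4
        nlinarith [norm_nonneg p, Real.pi_pos]
      rw [Quaternion.exp_of_re_eq_zero _ hre, hn, Real.sin_pi, Real.cos_pi, hu', h]
      norm_num
  · set t := u.re with ht
    set θ := Real.arccos t with hθ
    have hvpos : (0:ℝ) < ‖u.im‖ := norm_pos_iff.mpr hv
    have ht1 : -1 ≤ t := by nlinarith [sq_nonneg ‖u.im‖]
    have ht2 : t < 1 := by nlinarith
    refine ⟨(θ / ‖u.im‖) • u.im, by simp, ?_⟩
    have hre : ((θ / ‖u.im‖) • u.im).re = 0 := by simp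
    have hθ0 : 0 < θ := Real.arccos_pos.mpr ht2
    have hnorm : ‖(θ / ‖u.im‖) • u.im‖ = θ := by
      rw [norm_smul, Real.norm_eq_abs, abs_div, abs_of_pos hθ0, abs_of_pos hvpos,
        div_mul_cancel₀ _ (ne_of_gt hvpos)]
    rw [Quaternion.exp_of_re_eq_zero _ hre, hnorm]
    have hsin : Real.sin θ = ‖u.im‖ := by
      rw [hθ, Real.sin_arccos, show 1 - t^2 = ‖u.im‖^2 by linarith]
      exact Real.sqrt_sq hvpos.le
    have hcos : Real.cos θ = t := Real.cos_arccos ht1 ht2.le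
    rw [smul_smul, hsin, hcos]
    have hc : ‖u.im‖ / θ * (θ / ‖u.im‖) = 1 := by field_simp
    rw [hc, one_smul, Quaternion.re_add_im]

/-- Structure of special unitary 2×2 matrices. -/
theorem su2_structure (A : Matrix (Fin 2) (Fin 2) ℂ)
    (hA : Aᴴ * A = 1) (hAdet : A.det = 1) :
    A 1 1 = starRingEnd ℂ (A 0 0) ∧ A 1 0 = -starRingEnd ℂ (A 0 1) ∧
      Complex.normSq (A 0 0) + Complex.normSq (A 0 1) = 1 := by
  have h2 := A.mul_adjugate
  rw [hAdet, one_smul] at h2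
  have hadj : Aᴴ = A.adjugate := by
    calc Aᴴ = Aᴴ * (A * A.adjugate) := by rw [h2, mul_one]
      _ = (Aᴴ * A) * A.adjugate := by rw [mul_assoc]
      _ = A.adjugate := by rw [hA, one_mul]
  rw [Matrix.adjugate_fin_two] at hadj
  have e00 := congrFun (congrFun hadj 0) 0
  have e01 := congrFun (congrFun hadj 0) 1
  simp [Matrix.conjTranspose_apply] at e00 e01
  refine ⟨?_, ?_, ?_⟩
  · rw [← e00]
  · have : starRingEnd ℂ (A 1 0) = -A 0 1 := e01
    calc A 1 0 = starRingEnd ℂ (starRingEnd ℂ (A 1 0)) := by simp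
      _ = -starRingEnd ℂ (A 0 1) := by rw [this]; simp
  · have h00 := congrFun (congrFun hA 0) 0
    simp [Matrix.mul_apply, Fin.sum_univ_two, Matrix.conjTranspose_apply] at h00
    have hsum : (starRingEnd ℂ) (A 0 0) * A 0 0 + (starRingEnd ℂ) (A 1 0) * A 1 0 = 1 := h00
    have h1 : ((Complex.normSq (A 0 0) : ℂ)) + (Complex.normSq (A 1 0) : ℂ) = 1 := by
      rw [← Complex.normSq_eq_conj_mul_self, ← Complex.normSq_eq_conj_mul_self] at hsum
      exact hsum
    have h2' : Complex.normSq (A 1 0) = Complex.normSq (A 0 1) := by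
      have e01' : starRingEnd ℂ (A 1 0) = -A 0 1 := e01
      calc Complex.normSq (A 1 0) = Complex.normSq (starRingEnd ℂ (A 1 0)) := by simp
        _ = Complex.normSq (A 0 1) := by rw [e01']; simp
    exact_mod_cast h2' ▸ h1

open Quaternion in
/-- Every special unitary 2×2 matrix is the exponential of a traceless
anti-hermitian matrix. -/
theorem su2_exp (A : Matrix (Fin 2) (Fin 2) ℂ)
    (hA : Aᴴ * A = 1) (hAdet : A.det = 1) :
    ∃ x y z : ℝ, A = NormedSpace.exp
      !![(x:ℂ) * Complex.I, (y:ℂ) + (z:ℂ) * Complex.I;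
         -(y:ℂ) + (z:ℂ) * Complex.I, -((x:ℂ) * Complex.I)] := by
  obtain ⟨h11, h10, hn⟩ := su2_structure A hA hAdet
  set a := A 0 0 with ha
  set b := A 0 1 with hb
  set u : ℍ[ℝ] := quat a.re a.im b.re b.im with hu
  have hnu : ‖u‖ = 1 := by
    have h1 : normSq u = 1 := by
      rw [Quaternion.normSq_def']
      simp [hu]
      have := hn
      simp [Complex.normSq_apply] at this
      nlinarith [this]
    have h2 := Quaternion.normSq_eq_norm_mul_self u
    rw [h1] at h2
    nlinarith [norm_nonneg u]
  obtain ⟨q, hqre, hqexp⟩ := unit_quat_exp u hnu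
  refine ⟨q.imI, q.imJ, q.imK, ?_⟩
  have hmap : qm (NormedSpace.exp q) = NormedSpace.exp (qm q) := by
    letI : NormedAlgebra ℚ ℍ[ℝ] := NormedAlgebra.restrictScalars ℚ ℝ ℍ[ℝ]
    exact NormedSpace.map_exp qm (qm.toLinearMap.continuous_of_finiteDimensional) q
  have hqm : qm q = !![(q.imI:ℂ) * Complex.I, (q.imJ:ℂ) + (q.imK:ℂ) * Complex.I;
         -(q.imJ:ℂ) + (q.imK:ℂ) * Complex.I, -((q.imI:ℂ) * Complex.I)] := by
    ext i j
    fin_cases i <;> fin_cases j <;> simp [qm, hqre] <;> ring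
  have hqmu : qm u = A := by
    ext i j
    fin_cases i <;> fin_cases j <;>
      simp [qm, hu, h11, h10, ha, hb, Complex.ext_iff]
  rw [← hqm, ← hmap, hqexp, hqmu]

set_option maxHeartbeats 2000000 in
/-- The algebra homomorphism `M₂(ℂ) × M₂(ℂ) → M₄(ℂ)` sending a pair of matrices to the
corresponding parity-block matrix. -/
def Phi : (Matrix (Fin 2) (Fin 2) ℂ × Matrix (Fin 2) (Fin 2) ℂ) →ₐ[ℂ]
    Matrix (Fin 4) (Fin 4) ℂ where
  toFun P := !![P.1 0 0, 0,       0,       P.1 0 1;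
                0,       P.2 0 0, P.2 0 1, 0;
                0,       P.2 1 0, P.2 1 1, 0;
                P.1 1 0, 0,       0,       P.1 1 1]
  map_one' := by
    ext i j
    fin_cases i <;> fin_cases j <;>
      simp [Matrix.one_apply, Matrix.vecHead, Matrix.vecTail]
  map_mul' P Q := by
    ext i j
    fin_cases i <;> fin_cases j <;>
      simp [Matrix.mul_apply, Fin.sum_univ_four, Fin.sum_univ_two]
  map_zero' := by ext i j; fin_cases i <;> fin_cases j <;> simp [Matrix.vecHead, Matrix.vecTail]
  map_add' P Q := by ext i j; fin_cases i <;> fin_cases j <;> simp [Matrix.vecHead, Matrix.vecTail]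
  commutes' r := by
    ext i j
    fin_cases i <;> fin_cases j <;>
      simp [Matrix.algebraMap_eq_diagonal, Prod.algebraMap_apply,
        Matrix.diagonal, Matrix.one_apply, Matrix.vecHead, Matrix.vecTail]

theorem exp_Phi (Ma Mb : Matrix (Fin 2) (Fin 2) ℂ) :
    NormedSpace.exp (Phi (Ma, Mb)) = Phi (NormedSpace.exp Ma, NormedSpace.exp Mb) := by
  letI : NormedAlgebra ℚ (Matrix (Fin 2) (Fin 2) ℂ × Matrix (Fin 2) (Fin 2) ℂ) :=
    NormedAlgebra.restrictScalars ℚ ℂ _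
  haveI : @CompleteSpace (Matrix (Fin 2) (Fin 2) ℂ × Matrix (Fin 2) (Fin 2) ℂ)
      (@PseudoMetricSpace.toUniformSpace _ (@MetricSpace.toPseudoMetricSpace _
        NormedRing.toMetricSpace)) := by
    letI : NormedAddCommGroup (Matrix (Fin 2) (Fin 2) ℂ × Matrix (Fin 2) (Fin 2) ℂ) :=
      NonUnitalNormedRing.toNormedAddCommGroup
    exact FiniteDimensional.complete ℂ _
  refine (NormedSpace.map_exp Phi (Phi.toLinearMap.continuous_of_finiteDimensional) (Ma, Mb)).symm.trans ?_
  congr 1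
  have h1 : (NormedSpace.exp (Ma, Mb)).1 = NormedSpace.exp Ma := by
    have := NormedSpace.map_exp (AlgHom.fst ℂ (Matrix (Fin 2) (Fin 2) ℂ)
      (Matrix (Fin 2) (Fin 2) ℂ)) continuous_fst (Ma, Mb)
    exact this
  have h2 : (NormedSpace.exp (Ma, Mb)).2 = NormedSpace.exp Mb := by
    have := NormedSpace.map_exp (AlgHom.snd ℂ (Matrix (Fin 2) (Fin 2) ℂ)
      (Matrix (Fin 2) (Fin 2) ℂ)) continuous_snd (Ma, Mb)
    exact this
  exact Prod.ext h1 h2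

/-- Explicit forms of the Jordan–Wigner operators. -/
lemma c1_eq : c1 = !![0,0,1,0; 0,0,0,1; 1,0,0,0; 0,1,0,0] := by
  ext i j
  fin_cases i <;> fin_cases j <;>
    simp [c1, kron4, pX, Matrix.one_apply, Matrix.vecHead, Matrix.vecTail, fin4v3]

lemma c2_eq : c2 = !![0,0,-Complex.I,0; 0,0,0,-Complex.I;
    Complex.I,0,0,0; 0,Complex.I,0,0] := by
  ext i j
  fin_cases i <;> fin_cases j <;>
    simp [c2, kron4, pY, Matrix.one_apply, Matrix.vecHead, Matrix.vecTail, fin4v3]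

lemma c3_eq : c3 = !![0,1,0,0; 1,0,0,0; 0,0,0,-1; 0,0,-1,0] := by
  ext i j
  fin_cases i <;> fin_cases j <;>
    simp [c3, kron4, pX, pZ, Matrix.vecHead, Matrix.vecTail, fin4v3]

lemma c4_eq : c4 = !![0,-Complex.I,0,0; Complex.I,0,0,0;
    0,0,0,Complex.I; 0,0,-Complex.I,0] := by
  ext i j
  fin_cases i <;> fin_cases j <;>
    simp [c4, kron4, pY, pZ, Matrix.vecHead, Matrix.vecTail, fin4v3]

lemma c1_mul_c2 : c1 * c2 = !![Complex.I, 0, 0, 0; 0, Complex.I, 0, 0; 0, 0, -Complex.I, 0; 0, 0, 0, -Complex.I] := by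
  rw [c1_eq, c2_eq]
  ext i j
  fin_cases i <;> fin_cases j <;>
    simp [Matrix.mul_apply, Fin.sum_univ_four, Matrix.vecHead, Matrix.vecTail]

lemma c1_mul_c3 : c1 * c3 = !![0, 0, 0, -1; 0, 0, -1, 0; 0, 1, 0, 0; 1, 0, 0, 0] := by
  rw [c1_eq, c3_eq]
  ext i j
  fin_cases i <;> fin_cases j <;>
    simp [Matrix.mul_apply, Fin.sum_univ_four, Matrix.vecHead, Matrix.vecTail]

lemma c1_mul_c4 : c1 * c4 = !![0, 0, 0, Complex.I; 0, 0, -Complex.I, 0; 0, -Complex.I, 0, 0; Complex.I, 0, 0, 0] := by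
  rw [c1_eq, c4_eq]
  ext i j
  fin_cases i <;> fin_cases j <;>
    simp [Matrix.mul_apply, Fin.sum_univ_four, Matrix.vecHead, Matrix.vecTail]

lemma c2_mul_c1 : c2 * c1 = !![-Complex.I, 0, 0, 0; 0, -Complex.I, 0, 0; 0, 0, Complex.I, 0; 0, 0, 0, Complex.I] := by
  rw [c2_eq, c1_eq]
  ext i j
  fin_cases i <;> fin_cases j <;>
    simp [Matrix.mul_apply, Fin.sum_univ_four, Matrix.vecHead, Matrix.vecTail]

lemma c2_mul_c3 : c2 * c3 = !![0, 0, 0, Complex.I; 0, 0, Complex.I, 0; 0, Complex.I, 0, 0; Complex.I, 0, 0, 0] := by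
  rw [c2_eq, c3_eq]
  ext i j
  fin_cases i <;> fin_cases j <;>
    simp [Matrix.mul_apply, Fin.sum_univ_four, Matrix.vecHead, Matrix.vecTail]

lemma c2_mul_c4 : c2 * c4 = !![0, 0, 0, 1; 0, 0, -1, 0; 0, 1, 0, 0; -1, 0, 0, 0] := by
  rw [c2_eq, c4_eq]
  ext i j
  fin_cases i <;> fin_cases j <;>
    simp [Matrix.mul_apply, Fin.sum_univ_four, Matrix.vecHead, Matrix.vecTail]

lemma c3_mul_c1 : c3 * c1 = !![0, 0, 0, 1; 0, 0, 1, 0; 0, -1, 0, 0; -1, 0, 0, 0] := by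
  rw [c3_eq, c1_eq]
  ext i j
  fin_cases i <;> fin_cases j <;>
    simp [Matrix.mul_apply, Fin.sum_univ_four, Matrix.vecHead, Matrix.vecTail]

lemma c3_mul_c2 : c3 * c2 = !![0, 0, 0, -Complex.I; 0, 0, -Complex.I, 0; 0, -Complex.I, 0, 0; -Complex.I, 0, 0, 0] := by
  rw [c3_eq, c2_eq]
  ext i j
  fin_cases i <;> fin_cases j <;>
    simp [Matrix.mul_apply, Fin.sum_univ_four, Matrix.vecHead, Matrix.vecTail]

lemma c3_mul_c4 : c3 * c4 = !![Complex.I, 0, 0, 0; 0, -Complex.I, 0, 0; 0, 0, Complex.I, 0; 0, 0, 0, -Complex.I] := by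
  rw [c3_eq, c4_eq]
  ext i j
  fin_cases i <;> fin_cases j <;>
    simp [Matrix.mul_apply, Fin.sum_univ_four, Matrix.vecHead, Matrix.vecTail]

lemma c4_mul_c1 : c4 * c1 = !![0, 0, 0, -Complex.I; 0, 0, Complex.I, 0; 0, Complex.I, 0, 0; -Complex.I, 0, 0, 0] := by
  rw [c4_eq, c1_eq]
  ext i j
  fin_cases i <;> fin_cases j <;>
    simp [Matrix.mul_apply, Fin.sum_univ_four, Matrix.vecHead, Matrix.vecTail]

lemma c4_mul_c2 : c4 * c2 = !![0, 0, 0, -1; 0, 0, 1, 0; 0, -1, 0, 0; 1, 0, 0, 0] := by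
  rw [c4_eq, c2_eq]
  ext i j
  fin_cases i <;> fin_cases j <;>
    simp [Matrix.mul_apply, Fin.sum_univ_four, Matrix.vecHead, Matrix.vecTail]

lemma c4_mul_c3 : c4 * c3 = !![-Complex.I, 0, 0, 0; 0, Complex.I, 0, 0; 0, 0, -Complex.I, 0; 0, 0, 0, Complex.I] := by
  rw [c4_eq, c3_eq]
  ext i j
  fin_cases i <;> fin_cases j <;>
    simp [Matrix.mul_apply, Fin.sum_univ_four, Matrix.vecHead, Matrix.vecTail]

set_option maxHeartbeats 1000000 in
/-- Explicit form of the quadratic-Hamiltonian sum. -/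
lemma sum_explicit (h : Matrix (Fin 4) (Fin 4) ℝ) :
    (∑ μ, ∑ ν, if μ ≠ ν then ((h μ ν : ℂ)) • (cvec μ * cvec ν) else 0) =
    !![Complex.I*((h 0 1 : ℝ) - h 1 0 + h 2 3 - h 3 2), 0, 0,
         ((-(h 0 2) + h 1 3 + h 2 0 - h 3 1 : ℝ) : ℂ)
           + Complex.I*((h 0 3 + h 1 2 - h 2 1 - h 3 0 : ℝ) : ℂ);
       0, Complex.I*((h 0 1 : ℝ) - h 1 0 - h 2 3 + h 3 2),
         ((-(h 0 2) - h 1 3 + h 2 0 + h 3 1 : ℝ) : ℂ)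
           + Complex.I*((-(h 0 3) + h 1 2 - h 2 1 + h 3 0 : ℝ) : ℂ), 0;
       0, ((h 0 2 + h 1 3 - h 2 0 - h 3 1 : ℝ) : ℂ)
           + Complex.I*((-(h 0 3) + h 1 2 - h 2 1 + h 3 0 : ℝ) : ℂ),
         Complex.I*((-(h 0 1) + h 1 0 + h 2 3 - h 3 2 : ℝ) : ℂ), 0;
       ((h 0 2 - h 1 3 - h 2 0 + h 3 1 : ℝ) : ℂ)
           + Complex.I*((h 0 3 + h 1 2 - h 2 1 - h 3 0 : ℝ) : ℂ), 0, 0,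
         Complex.I*((-(h 0 1) + h 1 0 - h 2 3 + h 3 2 : ℝ) : ℂ)] := by
  simp only [Fin.sum_univ_four, cvec, Matrix.cons_val_zero, Matrix.cons_val_one,
    Matrix.head_cons, Matrix.cons_val_two, Matrix.tail_cons, Matrix.cons_val_three,
    ne_eq, Fin.reduceEq, not_false_eq_true, ite_true, not_true_eq_false, ite_false,
    ite_self,
    c1_mul_c2, c1_mul_c3, c1_mul_c4, c2_mul_c1, c2_mul_c3, c2_mul_c4,
    c3_mul_c1, c3_mul_c2, c3_mul_c4, c4_mul_c1, c4_mul_c2, c4_mul_c3,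
    Matrix.smul_of, Matrix.smul_cons, Matrix.smul_empty, Matrix.of_add_of,
    Matrix.cons_add_cons, Matrix.empty_add_empty, smul_eq_mul, smul_zero,
    mul_zero, mul_one, mul_neg, add_zero, zero_add]
  ext i j
  fin_cases i <;> fin_cases j <;>
    (simp only [Matrix.of_apply, Matrix.cons_val', Matrix.cons_val_zero, Matrix.cons_val_one,
      Matrix.head_cons, Matrix.head_fin_const, Matrix.cons_val_two, Matrix.tail_cons,
      Matrix.cons_val_three, Matrix.empty_val', Matrix.cons_val_fin_one] <;> push_cast <;> ring)


/-- The antisymmetric coefficient matrix realizing a given pair of su(2) generators. -/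
def hmat (α β γ α' β' γ' : ℝ) : Matrix (Fin 4) (Fin 4) ℝ :=
  !![0, -(α+α')/4, (β+β')/4, (γ'-γ)/4;
     (α+α')/4, 0, -(γ+γ')/4, (β'-β)/4;
     -(β+β')/4, (γ+γ')/4, 0, (α'-α)/4;
     (γ-γ')/4, (β-β')/4, (α-α')/4, 0]

lemma hmat_antisym (α β γ α' β' γ' : ℝ) :
    (hmat α β γ α' β' γ')ᵀ = -(hmat α β γ α' β' γ') := by
  ext i j
  fin_cases i <;> fin_cases j <;>
    simp [hmat, Matrix.vecHead, Matrix.vecTail] <;> ring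

set_option maxHeartbeats 1000000 in
/-- The key computation: the Gaussian exponent realizes a block pair of su(2) elements. -/
lemma key_eq (α β γ α' β' γ' : ℝ) :
    Complex.I • quadH2 (hmat α β γ α' β' γ') =
    Phi (!![(α:ℂ) * Complex.I, (β:ℂ) + (γ:ℂ) * Complex.I;
            -(β:ℂ) + (γ:ℂ) * Complex.I, -((α:ℂ) * Complex.I)],
         !![(α':ℂ) * Complex.I, (β':ℂ) + (γ':ℂ) * Complex.I;
            -(β':ℂ) + (γ':ℂ) * Complex.I, -((α':ℂ) * Complex.I)]) := by
  rw [quadH2, sum_explicit]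
  ext i j
  fin_cases i <;> fin_cases j <;>
    (simp only [Phi, hmat, AlgHom.coe_mk, RingHom.coe_mk, MonoidHom.coe_mk, OneHom.coe_mk,
      Matrix.smul_apply, Matrix.of_apply, Matrix.cons_val', Matrix.cons_val_zero,
      Matrix.cons_val_one, Matrix.head_cons, Matrix.head_fin_const, Matrix.cons_val_two,
      Matrix.tail_cons, Matrix.cons_val_three, Matrix.empty_val', Matrix.cons_val_fin_one,
      smul_eq_mul] <;> push_cast <;> ring_nf <;> simp [Complex.ext_iff] <;> ring_nf)

/-- Every nearest-neighbour `G(A,B)` gate with `A, B ∈ SU(2)` is a Gaussian operation: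
`G(A,B) = exp(iH)` for a quadratic Hamiltonian `H` with real antisymmetric `h`. -/
theorem G_gate_is_gaussian (A B : Matrix (Fin 2) (Fin 2) ℂ)
    (hA : Aᴴ * A = 1) (hAdet : A.det = 1)
    (hB : Bᴴ * B = 1) (hBdet : B.det = 1) :
    ∃ h : Matrix (Fin 4) (Fin 4) ℝ, hᵀ = -h ∧
      G A B = NormedSpace.exp (Complex.I • quadH2 h) := by
  obtain ⟨α, β, γ, hAe⟩ := su2_exp A hA hAdet
  obtain ⟨α', β', γ', hBe⟩ := su2_exp B hB hBdet
  refine ⟨hmat α β γ α' β' γ', hmat_antisym α β γ α' β' γ', ?_⟩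
  rw [key_eq, exp_Phi, ← hAe, ← hBe]
  ext i j
  fin_cases i <;> fin_cases j <;> simp [G, Phi, Matrix.vecHead, Matrix.vecTail]

end
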